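/- arXiv:2101.02142 — 6 statements merged into one kernel-verified Lean document; each statement's English description precedes it below -/
import Mathlib

section
/- Let R be a commutative ring, P ∈ R[X] a monic polynomial of degree n with at least 2 nonzero coefficients, and let γ ∈ (0,1] be such that the second degree of P (the degree of P − X^n) is at most (1−γ)·n. Let Q ∈ R[X] be a polynomial of degree at most n−1+k for some k ≥ 0. Then the remainder Q mod P has at most #Q·(#P−1)^{⌈k/(γn)⌉} nonzero coefficients. -/
open Polynomial

private lemma coeff_divX_iter {R : Type*} [CommRing R] (m : ℕ) :
    ∀ (p : Polynomial R) (i : ℕ), (Polynomial.divX^[m] p).coeff i = p.coeff (i + m) := by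
  induction m with
  | zero => intro p i; simp
  | succ t ih =>
    intro p i
    rw [Function.iterate_succ_apply, ih (Polynomial.divX p) i, coeff_divX]
    ring_nf

theorem sparsity_modByMonic_le {R : Type*} [CommRing R] (n k : ℕ) (γ : ℝ)
    (P Q : Polynomial R) (hP : P.Monic) (hPdeg : P.natDegree = n)
    (hPsp : 2 ≤ P.support.card) (hγ0 : 0 < γ) (hγ1 : γ ≤ 1)
    (hgap : ((P - X ^ n).natDegree : ℝ) ≤ (1 - γ) * n)
    (hQ : Q.natDegree ≤ n - 1 + k) :
    (Q %ₘ P).support.card ≤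
      Q.support.card * (P.support.card - 1) ^ ⌈(k : ℝ) / (γ * n)⌉₊ := by
  classical
  -- nontriviality
  have hPne : P ≠ 0 := by
    intro h
    rw [h] at hPsp
    simp at hPsp
  obtain ⟨i0, hi0⟩ : ∃ i, P.coeff i ≠ 0 := by
    by_contra h
    push_neg at h
    exact hPne (Polynomial.ext fun i => by simp [h i])
  haveI : Nontrivial R := nontrivial_of_ne _ _ hi0
  -- n ≥ 1
  have hn : 1 ≤ n := by
    by_contra h
    push_neg at h
    interval_cases n
    have hsub : P.support ⊆ Finset.range 1 := by
      intro i hi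
      rcases Finset.mem_range.mpr (Nat.lt_succ_of_le (le_natDegree_of_mem_supp i hi)) with h'
      simpa [hPdeg] using h'
    have := Finset.card_le_card hsub
    simp at this
    omega
  have hγn : (0:ℝ) < γ * n := by
    have : (0:ℝ) < (n:ℝ) := by exact_mod_cast hn
    positivity
  set d : ℕ := (P - X ^ n).natDegree with hd_def
  have hdlt : d < n := by
    have h1 : (d : ℝ) < (n : ℝ) := by
      have : (1 - γ) * n < n := by nlinarith [ (show (0:ℝ) < (n:ℝ) by exact_mod_cast hn) ]
      linarith
    exact_mod_cast h1
  set m : ℕ := n - d with hm_def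
  have hdm : d + m = n := by omega
  have hm1 : 1 ≤ m := by omega
  have hmγ : γ * n ≤ (m : ℝ) := by
    have hc : (m : ℝ) = (n : ℝ) - (d : ℝ) := by
      have : d ≤ n := le_of_lt hdlt
      push_cast [hm_def, Nat.cast_sub this]
      ring
    rw [hc]
    linarith
  -- support of X^n - P
  have hPn1 : P.coeff n = 1 := by
    rw [← hPdeg]; exact hP.coeff_natDegree
  have hSsupp : (X ^ n - P : Polynomial R).support = P.support.erase n := by
    ext i
    simp only [Polynomial.mem_support_iff, Finset.mem_erase]
    rcases eq_or_ne i n with rfl | hne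
    · simp [Polynomial.coeff_sub, Polynomial.coeff_X_pow, hPn1]
    · simp [Polynomial.coeff_sub, Polynomial.coeff_X_pow, hne, sub_eq_zero, eq_comm]
  have hnP : n ∈ P.support := by
    rw [Polynomial.mem_support_iff, hPn1]; exact one_ne_zero
  have hScard : (X ^ n - P : Polynomial R).support.card = P.support.card - 1 := by
    rw [hSsupp, Finset.card_erase_of_mem hnP]
  have hSdeg : (X ^ n - P : Polynomial R).natDegree = d := by
    rw [hd_def, ← Polynomial.natDegree_neg, neg_sub]
  have hp1 : 1 ≤ P.support.card - 1 := by omega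
  -- the key induction
  have key : ∀ j : ℕ, ∀ Q : Polynomial R, ∀ k : ℕ, Q.natDegree ≤ n - 1 + k →
      (k : ℝ) / (γ * n) ≤ j →
      (Q %ₘ P).support.card ≤ Q.support.card * (P.support.card - 1) ^ j := by
    intro j
    induction j with
    | zero =>
      intro Q k hdeg hk
      have hk0 : k = 0 := by
        have h1 : (k : ℝ) ≤ 0 := by
          have := (div_le_iff₀ hγn).mp hk
          simpa using this
        exact_mod_cast le_antisymm h1 (by positivity)
      subst hk0
      have hlt : Q.degree < P.degree := by
        apply lt_of_le_of_lt Q.degree_le_natDegree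
        rw [Polynomial.degree_eq_natDegree hPne, hPdeg]
        exact_mod_cast (by omega : Q.natDegree < n)
      rw [(Polynomial.modByMonic_eq_self_iff hP).mpr hlt]
      simp
    | succ j ih =>
      intro Q k hdeg hk
      rcases Nat.eq_zero_or_pos k with rfl | hkpos
      · have hlt : Q.degree < P.degree := by
          apply lt_of_le_of_lt Q.degree_le_natDegree
          rw [Polynomial.degree_eq_natDegree hPne, hPdeg]
          exact_mod_cast (by omega : Q.natDegree < n)
        rw [(Polynomial.modByMonic_eq_self_iff hP).mpr hlt]
        exact Nat.le_mul_of_pos_right _ (pow_pos (by omega) _)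
      -- one reduction round
      set B : Polynomial R := Polynomial.divX^[n] Q with hB_def
      have hB : ∀ i, B.coeff i = Q.coeff (i + n) := fun i => coeff_divX_iter n Q i
      set A : Polynomial R := Q - X ^ n * B with hA_def
      have hA : ∀ i, A.coeff i = if i < n then Q.coeff i else 0 := by
        intro i
        have hXB : (X ^ n * B).coeff i = if n ≤ i then Q.coeff i else 0 := by
          rw [(commute_X_pow B n).eq, Polynomial.coeff_mul_X_pow']
          rcases le_or_gt n i with h | h
          · simp [h, hB, Nat.sub_add_cancel h]
          · simp [not_le.mpr h, h]
        rw [hA_def, Polynomial.coeff_sub, hXB]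
        rcases lt_or_ge i n with h | h
        · simp [h, not_le.mpr h]
        · simp [not_lt.mpr h, h]
      -- support cards
      have hAcard : A.support.card ≤ (Q.support.filter (fun i => i < n)).card := by
        apply Finset.card_le_card
        intro i hi
        rw [Polynomial.mem_support_iff] at hi
        rw [hA i] at hi
        by_cases h : i < n
        · rw [if_pos h] at hi
          exact Finset.mem_filter.mpr ⟨Polynomial.mem_support_iff.mpr hi, h⟩
        · rw [if_neg h] at hi; exact absurd rfl hi
      have hBcard : B.support.card ≤ (Q.support.filter (fun i => ¬ i < n)).card := by
        have himg : B.support.image (· + n) ⊆ Q.support.filter (fun i => ¬ i < n) := by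
          intro i hi
          obtain ⟨j, hj, rfl⟩ := Finset.mem_image.mp hi
          rw [Polynomial.mem_support_iff] at hj
          rw [hB j] at hj
          exact Finset.mem_filter.mpr ⟨Polynomial.mem_support_iff.mpr hj, by omega⟩
        calc B.support.card = (B.support.image (· + n)).card :=
              (Finset.card_image_of_injective _ (add_left_injective n)).symm
          _ ≤ _ := Finset.card_le_card himg
      have hABcard : A.support.card + B.support.card ≤ Q.support.card := by
        have := Finset.card_filter_add_card_filter_not
          (s := Q.support) (p := fun i => i < n)
        omega
      -- degrees
      have hBdeg : B.natDegree ≤ k - 1 := by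
        apply Polynomial.natDegree_le_iff_coeff_eq_zero.mpr
        intro t ht
        rw [hB t]
        exact Polynomial.coeff_eq_zero_of_natDegree_lt (by omega)
      have hAdeg : A.natDegree ≤ n - 1 := by
        apply Polynomial.natDegree_le_iff_coeff_eq_zero.mpr
        intro t ht
        rw [hA t, if_neg (by omega)]
      -- the reduced polynomial
      set R' : Polynomial R := A + (X ^ n - P) * B with hR'_def
      have hR'mod : R' %ₘ P = Q %ₘ P := by
        have hRQ : R' = Q - P * B := by rw [hR'_def, hA_def]; ring
        rw [hRQ, Polynomial.sub_modByMonic, Polynomial.self_mul_modByMonic hP, sub_zero]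
      have hR'deg : R'.natDegree ≤ n - 1 + (k - m) := by
        apply le_trans (Polynomial.natDegree_add_le _ _)
        have h2 : ((X ^ n - P) * B).natDegree ≤ d + (k - 1) := by
          apply le_trans (Polynomial.natDegree_mul_le)
          rw [hSdeg]
          omega
        have := hAdeg
        simp only [max_le_iff]
        omega
      have hR'card : R'.support.card ≤ A.support.card + (P.support.card - 1) * B.support.card := by
        calc R'.support.card ≤ (A.support ∪ ((X ^ n - P) * B).support).card :=
              Finset.card_le_card (Polynomial.support_add)
          _ ≤ A.support.card + ((X ^ n - P) * B).support.card := Finset.card_union_le _ _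
          _ ≤ A.support.card + (P.support.card - 1) * B.support.card := by
              have := Polynomial.card_support_mul_le (p := (X ^ n - P)) (q := B)
              rw [hScard] at this
              omega
      -- real inequality for k - m
      have hkm : ((k - m : ℕ) : ℝ) / (γ * n) ≤ j := by
        rcases le_or_gt k m with h | h
        · rw [Nat.sub_eq_zero_of_le h]
          simp
        · have hk' : (k : ℝ) / (γ * n) ≤ (j : ℝ) + 1 := by push_cast at hk; linarith
          have hkr : (k : ℝ) ≤ ((j : ℝ) + 1) * (γ * n) := (div_le_iff₀ hγn).mp hk'
          rw [Nat.cast_sub (le_of_lt h)]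
          rw [div_le_iff₀ hγn]
          nlinarith
      -- apply IH
      calc (Q %ₘ P).support.card = (R' %ₘ P).support.card := by rw [hR'mod]
        _ ≤ R'.support.card * (P.support.card - 1) ^ j := ih R' (k - m) hR'deg hkm
        _ ≤ (A.support.card + (P.support.card - 1) * B.support.card) *
              (P.support.card - 1) ^ j := Nat.mul_le_mul_right _ hR'card
        _ ≤ (Q.support.card * (P.support.card - 1)) * (P.support.card - 1) ^ j := by
              apply Nat.mul_le_mul_right
              calc A.support.card + (P.support.card - 1) * B.support.card
                  ≤ A.support.card * (P.support.card - 1) +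
                      B.support.card * (P.support.card - 1) := by
                    have h1 : A.support.card ≤ A.support.card * (P.support.card - 1) :=
                      Nat.le_mul_of_pos_right _ (by omega)
                    have h2 : (P.support.card - 1) * B.support.card =
                        B.support.card * (P.support.card - 1) := Nat.mul_comm _ _
                    omega
                _ = (A.support.card + B.support.card) * (P.support.card - 1) := by ring
                _ ≤ Q.support.card * (P.support.card - 1) :=
                    Nat.mul_le_mul_right _ hABcard
        _ = Q.support.card * (P.support.card - 1) ^ (j + 1) := by ring
  exact key _ Q k hQ (Nat.le_ceil _)
end

section
/- Let P ∈ ℤ[X] be a monic polynomial of degree n with at least 2 nonzero coefficients, and let γ ∈ (0,1] be such that the degree of P − X^n is at most (1−γ)·n. Let Q ∈ ℤ[X] be a polynomial of degree at most n−1+k for some k ≥ 0. Then ‖Q mod P‖ ≤ ‖Q‖·(#P·‖P‖)^{⌈k/(γn)⌉}. -/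
open Polynomial

/-- The norm of an integer polynomial: the maximum of the absolute values of its
coefficients (as a natural number). -/
noncomputable def polyNorm (F : Polynomial ℤ) : ℕ :=
  F.support.sup fun i => (F.coeff i).natAbs

lemma natAbs_coeff_le (F : Polynomial ℤ) (i : ℕ) : (F.coeff i).natAbs ≤ polyNorm F := by
  by_cases h : i ∈ F.support
  · exact Finset.le_sup (f := fun i => (F.coeff i).natAbs) h
  · simp [Polynomial.notMem_support_iff.mp h]

lemma polyNorm_le_of {F : Polynomial ℤ} {B : ℕ} (h : ∀ i, (F.coeff i).natAbs ≤ B) :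
    polyNorm F ≤ B := Finset.sup_le fun i _ => h i

lemma coeff_sum_monomial (m : ℕ) (f : ℕ → ℤ) (j : ℕ) :
    (∑ i ∈ Finset.range m, monomial i (f i)).coeff j = if j < m then f j else 0 := by
  rw [finset_sum_coeff]
  simp only [coeff_monomial]
  rw [Finset.sum_ite_eq' (Finset.range m) j f]
  simp [Finset.mem_range]

lemma natAbs_sum_le' {α : Type*} (s : Finset α) (f : α → ℤ) :
    (∑ x ∈ s, f x).natAbs ≤ ∑ x ∈ s, (f x).natAbs := by
  rw [← Nat.cast_le (α := ℤ), Int.natCast_natAbs, Nat.cast_sum]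
  simpa [Int.natCast_natAbs] using Finset.abs_sum_le_sum_abs f s

lemma natAbs_coeff_mul_le (R S : Polynomial ℤ) (i : ℕ) :
    ((R * S).coeff i).natAbs ≤ R.support.card * (polyNorm R * polyNorm S) := by
  rw [Polynomial.coeff_mul]
  calc (∑ x ∈ Finset.HasAntidiagonal.antidiagonal i, R.coeff x.1 * S.coeff x.2).natAbs
      ≤ ∑ x ∈ Finset.HasAntidiagonal.antidiagonal i, (R.coeff x.1 * S.coeff x.2).natAbs := by
        exact natAbs_sum_le' _ _
    _ ≤ ∑ x ∈ Finset.HasAntidiagonal.antidiagonal i,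
          (if x.1 ∈ R.support then polyNorm R * polyNorm S else 0) := by
        apply Finset.sum_le_sum
        intro x _
        by_cases hx : x.1 ∈ R.support
        · simp only [hx, if_true, Int.natAbs_mul]
          exact Nat.mul_le_mul (natAbs_coeff_le R x.1) (natAbs_coeff_le S x.2)
        · simp [Polynomial.notMem_support_iff.mp hx]
    _ = ((Finset.HasAntidiagonal.antidiagonal i).filter (fun x => x.1 ∈ R.support)).card *
          (polyNorm R * polyNorm S) := by
        rw [Finset.sum_ite, Finset.sum_const, Finset.sum_const_zero, add_zero, smul_eq_mul]
    _ ≤ R.support.card * (polyNorm R * polyNorm S) := by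
        apply Nat.mul_le_mul_right
        apply Finset.card_le_card_of_injOn (fun x => x.1)
        · intro x hx
          exact (Finset.mem_filter.mp hx).2
        · intro x hx y hy hxy
          have hx' := Finset.HasAntidiagonal.mem_antidiagonal.mp (Finset.mem_filter.mp hx).1
          have hy' := Finset.HasAntidiagonal.mem_antidiagonal.mp (Finset.mem_filter.mp hy).1
          have h1 : x.1 = y.1 := hxy
          ext
          · exact h1
          · omega

theorem norm_modByMonic_le (n k : ℕ) (γ : ℝ) (P Q : Polynomial ℤ)
    (hP : P.Monic) (hPdeg : P.natDegree = n) (hPsp : 2 ≤ P.support.card)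
    (hγ0 : 0 < γ) (hγ1 : γ ≤ 1)
    (hgap : ((P - X ^ n).natDegree : ℝ) ≤ (1 - γ) * n)
    (hQ : Q.natDegree ≤ n - 1 + k) :
    polyNorm (Q %ₘ P) ≤
      polyNorm Q * (P.support.card * polyNorm P) ^ ⌈(k : ℝ) / (γ * n)⌉₊ := by
  -- basic facts
  have hn : 1 ≤ n := by
    by_contra h
    have hn0 : n = 0 := by omega
    have : P = 1 := (hP.natDegree_eq_zero).mp (hn0 ▸ hPdeg)
    rw [this, ← Polynomial.C_1, Polynomial.support_C one_ne_zero] at hPsp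
    simp at hPsp
  have hPn1 : P.coeff n = 1 := by
    have := hP.leadingCoeff
    rwa [Polynomial.leadingCoeff, hPdeg] at this
  have hPnorm1 : 1 ≤ polyNorm P := by
    have := natAbs_coeff_le P n
    rw [hPn1] at this
    simpa using this
  set M := P.support.card * polyNorm P with hM
  have hM1 : 1 ≤ M := by
    have : 2 * 1 ≤ M := Nat.mul_le_mul hPsp hPnorm1
    omega
  have hγn : (0:ℝ) < γ * n := by positivity
  -- the gap polynomial
  set R : Polynomial ℤ := X ^ n - P with hR
  have hRdeg : (R.natDegree : ℝ) ≤ n - γ * n := by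
    have : R = -(P - X ^ n) := by ring
    rw [this, Polynomial.natDegree_neg]
    linarith [hgap]
  have hRn : R.natDegree ≤ n := by
    have : (R.natDegree : ℝ) ≤ (n : ℝ) := by linarith
    exact_mod_cast this
  set g : ℕ := ⌈γ * n⌉₊ with hgdef
  have hg1 : 1 ≤ g := Nat.one_le_iff_ne_zero.mpr (by
    simp only [hgdef, ne_eq, Nat.ceil_eq_zero, not_le]
    exact hγn)
  have hgR : R.natDegree + g ≤ n := by
    have h1 : γ * n ≤ ((n - R.natDegree : ℕ) : ℝ) := by
      rw [Nat.cast_sub hRn]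
      linarith
    have := Nat.ceil_le.mpr h1
    omega
  have hgc : γ * n ≤ (g : ℝ) := Nat.le_ceil _
  -- coefficient bounds for R
  have hRcoeff : ∀ i, (R.coeff i).natAbs ≤ polyNorm P := by
    intro i
    rw [hR, Polynomial.coeff_sub, Polynomial.coeff_X_pow]
    by_cases hi : i = n
    · subst hi; simp [hPn1]
    · simp only [hi, if_false, zero_sub, Int.natAbs_neg]
      exact natAbs_coeff_le P i
  have hRnorm : polyNorm R ≤ polyNorm P := polyNorm_le_of hRcoeff
  have hRsupp : R.support.card + 1 ≤ P.support.card := by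
    have hsub : R.support ⊆ P.support.erase n := by
      intro i hi
      have hi' : R.coeff i ≠ 0 := Polynomial.mem_support_iff.mp hi
      have hin : i ≠ n := by
        intro h; subst h
        apply hi'
        rw [hR, Polynomial.coeff_sub, Polynomial.coeff_X_pow, hPn1]
        simp
      refine Finset.mem_erase.mpr ⟨hin, Polynomial.mem_support_iff.mpr ?_⟩
      intro h0
      apply hi'
      rw [hR, Polynomial.coeff_sub, Polynomial.coeff_X_pow, h0]
      simp [hin]
    have h1 : R.support.card ≤ (P.support.erase n).card := Finset.card_le_card hsub
    have hnmem : n ∈ P.support := Polynomial.mem_support_iff.mpr (by rw [hPn1]; exact one_ne_zero)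
    have h2 : (P.support.erase n).card = P.support.card - 1 := Finset.card_erase_of_mem hnmem
    omega
  -- main induction
  suffices H : ∀ k : ℕ, ∀ Q : Polynomial ℤ, Q.natDegree ≤ n - 1 + k →
      polyNorm (Q %ₘ P) ≤ polyNorm Q * M ^ ⌈(k : ℝ) / (γ * n)⌉₊ by
    exact H k Q hQ
  clear hQ
  intro k
  induction k using Nat.strong_induction_on with
  | _ k ih =>
    intro Q hQk
    rcases Nat.eq_zero_or_pos k with hk0 | hk1
    · subst hk0
      have hdeg : Q.degree < P.degree := by
        have h1 : Q.degree ≤ ((n - 1 : ℕ) : WithBot ℕ) :=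
          le_trans Polynomial.degree_le_natDegree (by exact_mod_cast hQk)
        have h2 : P.degree = (n : WithBot ℕ) := by
          rw [Polynomial.degree_eq_natDegree hP.ne_zero, hPdeg]
        rw [h2]
        refine lt_of_le_of_lt h1 ?_
        exact_mod_cast Nat.sub_lt hn one_pos
      rw [(Polynomial.modByMonic_eq_self_iff hP).mpr hdeg]
      simp
    · -- inductive step
      set Q1 : Polynomial ℤ := ∑ i ∈ Finset.range n, monomial i (Q.coeff i) with hQ1def
      set Q2 : Polynomial ℤ := ∑ i ∈ Finset.range k, monomial i (Q.coeff (n + i)) with hQ2def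
      have hc1 : ∀ j, Q1.coeff j = if j < n then Q.coeff j else 0 :=
        fun j => coeff_sum_monomial n _ j
      have hc2 : ∀ j, Q2.coeff j = if j < k then Q.coeff (n + j) else 0 :=
        fun j => coeff_sum_monomial k _ j
      have hsplit : Q = Q1 + Q2 * X ^ n := by
        ext j
        rw [Polynomial.coeff_add, hc1 j, Polynomial.coeff_mul_X_pow', hc2 (j - n)]
        rcases lt_or_ge j n with h | h
        · simp [h, not_le.mpr h]
        · simp only [not_lt.mpr h, if_false, le_refl, h, if_true, zero_add]
          rcases lt_or_ge j (n + k) with h2 | h2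
          · have h3 : j - n < k := by omega
            rw [if_pos h3]
            congr 1
            omega
          · have h3 : ¬ (j - n < k) := by omega
            rw [if_neg h3]
            exact Polynomial.coeff_eq_zero_of_natDegree_lt (by omega)
      have hmodeq : Q %ₘ P = (Q1 + R * Q2) %ₘ P := by
        apply Polynomial.modByMonic_eq_of_dvd_sub hP
        refine ⟨Q2, ?_⟩
        rw [hR]
        nth_rewrite 1 [hsplit]
        ring
      -- norm bound on the reduced polynomial
      have hQ1n : ∀ j, (Q1.coeff j).natAbs ≤ polyNorm Q := by
        intro j; rw [hc1 j]
        split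
        · exact natAbs_coeff_le Q j
        · simp
      have hQ2n : polyNorm Q2 ≤ polyNorm Q := polyNorm_le_of (by
        intro j; rw [hc2 j]
        split
        · exact natAbs_coeff_le Q _
        · simp)
      have hQ'norm : polyNorm (Q1 + R * Q2) ≤ polyNorm Q * M := by
        apply polyNorm_le_of
        intro j
        rw [Polynomial.coeff_add]
        calc (Q1.coeff j + (R * Q2).coeff j).natAbs
            ≤ (Q1.coeff j).natAbs + ((R * Q2).coeff j).natAbs := Int.natAbs_add_le _ _
          _ ≤ polyNorm Q + R.support.card * (polyNorm R * polyNorm Q2) :=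
              Nat.add_le_add (hQ1n j) (natAbs_coeff_mul_le R Q2 j)
          _ ≤ polyNorm Q + R.support.card * (polyNorm P * polyNorm Q) := by
              exact Nat.add_le_add_left
                (Nat.mul_le_mul_left _ (Nat.mul_le_mul hRnorm hQ2n)) _
          _ ≤ polyNorm Q * M := by
              rw [hM]
              have h1 : polyNorm Q + R.support.card * (polyNorm P * polyNorm Q)
                  ≤ polyNorm Q * ((R.support.card + 1) * polyNorm P) := by
                have he : polyNorm Q * ((R.support.card + 1) * polyNorm P)
                    = polyNorm Q * polyNorm P
                      + R.support.card * (polyNorm P * polyNorm Q) := by ring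
                rw [he]
                refine Nat.add_le_add_right ?_ _
                calc polyNorm Q = polyNorm Q * 1 := (Nat.mul_one _).symm
                  _ ≤ polyNorm Q * polyNorm P := Nat.mul_le_mul_left _ hPnorm1
              exact le_trans h1 (Nat.mul_le_mul_left _ (Nat.mul_le_mul_right _ hRsupp))
      -- degree bound on the reduced polynomial
      have hQ1d : Q1.natDegree ≤ n - 1 := by
        apply Polynomial.natDegree_le_iff_coeff_eq_zero.mpr
        intro N hN
        rw [hc1 N, if_neg (by omega)]
      have hQ2d : Q2.natDegree ≤ k - 1 := by
        apply Polynomial.natDegree_le_iff_coeff_eq_zero.mpr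
        intro N hN
        rw [hc2 N, if_neg (by omega)]
      have hQ'd : (Q1 + R * Q2).natDegree ≤ n - 1 + (k - g) := by
        refine le_trans (Polynomial.natDegree_add_le _ _) (max_le (by omega) ?_)
        have h2 := Polynomial.natDegree_mul_le (p := R) (q := Q2)
        omega
      have hlt : k - g < k := by omega
      have hih := ih (k - g) hlt (Q1 + R * Q2) hQ'd
      have hceil : ⌈((k - g : ℕ) : ℝ) / (γ * n)⌉₊ + 1 ≤ ⌈(k : ℝ) / (γ * n)⌉₊ := by
        rcases le_or_gt k g with hkg | hkg
        · have hz : k - g = 0 := by omega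
          rw [hz]
          simp only [Nat.cast_zero, zero_div, Nat.ceil_zero, zero_add]
          exact Nat.ceil_pos.mpr (div_pos (by exact_mod_cast hk1) hγn)
        · have hcast : ((k - g : ℕ) : ℝ) = (k : ℝ) - g := by
            rw [Nat.cast_sub (le_of_lt hkg)]
          rw [← Nat.ceil_add_one (by positivity)]
          apply Nat.ceil_le_ceil
          rw [hcast]
          have : ((k : ℝ) - g) / (γ * n) + 1 = (((k : ℝ) - g) + γ * n) / (γ * n) := by
            field_simp
          rw [this]
          gcongr
          linarith [hgc]
      calc polyNorm (Q %ₘ P) = polyNorm ((Q1 + R * Q2) %ₘ P) := by rw [hmodeq]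
        _ ≤ polyNorm (Q1 + R * Q2) * M ^ ⌈((k - g : ℕ) : ℝ) / (γ * n)⌉₊ := hih
        _ ≤ (polyNorm Q * M) * M ^ ⌈((k - g : ℕ) : ℝ) / (γ * n)⌉₊ :=
            Nat.mul_le_mul_right _ hQ'norm
        _ = polyNorm Q * M ^ (⌈((k - g : ℕ) : ℝ) / (γ * n)⌉₊ + 1) := by ring
        _ ≤ polyNorm Q * M ^ ⌈(k : ℝ) / (γ * n)⌉₊ :=
            Nat.mul_le_mul_left _ (Nat.pow_le_pow_right hM1 hceil)
end

section
/- Let R be a commutative ring, n ≥ 1, and F, G ∈ R[X] with deg F < n and deg G < n. Write F = Σ_{i<n} f_i X^i and G = Σ_{j<n} g_j X^j, and let α ∈ R. Define the sequence (c_j) by c_0 = F(α) and c_{j+1} = α·c_j − (α^n − 1)·f_{n−1−j} for 0 ≤ j ≤ n−2. Then the evaluation at α of the remainder (F·G) mod (X^n − 1) equals Σ_{j=0}^{n−1} c_j·g_j. -/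
open Polynomial Finset

section aux

variable {R : Type*} [CommRing R]

private lemma modM [Nontrivial R] {n : ℕ} (hn : 1 ≤ n) {A B : Polynomial R}
    (hA : A.degree < n) (hB : B.degree < n) :
    (X ^ n * B + A) %ₘ (X ^ n - 1) = B + A := by
  have hpm : (X ^ n - 1 : Polynomial R).Monic := by
    simpa using monic_X_pow_sub_C (1 : R) (by omega)
  have hpd : (X ^ n - 1 : Polynomial R).degree = n := by
    simpa using degree_X_pow_sub_C (by omega) (1 : R)
  have key : X ^ n * B + A = (X ^ n - 1) * B + (B + A) := by ring
  rw [key, add_modByMonic, (modByMonic_eq_zero_iff_dvd hpm).2 (dvd_mul_right _ _), zero_add,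
    (modByMonic_eq_self_iff hpm).2]
  rw [hpd]
  exact lt_of_le_of_lt (degree_add_le _ _) (max_lt hB hA)

private lemma coeffC [Nontrivial R] {n : ℕ} (hn : 1 ≤ n) {P : Polynomial R}
    (hP : P.degree < ((n + n : ℕ) : WithBot ℕ)) {k : ℕ} (hk : k < n) :
    (P %ₘ (X ^ n - 1)).coeff k = P.coeff k + P.coeff (k + n) := by
  have hxm : (X ^ n : Polynomial R).Monic := monic_X_pow n
  have hxd : (X ^ n : Polynomial R).degree = n := degree_X_pow n
  set B := P /ₘ X ^ n with hBdef
  set A := P %ₘ X ^ n with hAdef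
  have hPeq : P = X ^ n * B + A := by
    rw [hAdef, hBdef, add_comm]; exact (modByMonic_add_div P (X ^ n)).symm
  have hA : A.degree < n := hxd ▸ degree_modByMonic_lt P hxm
  have hB : B.degree < n := by
    rcases eq_or_ne B 0 with h | h
    · rw [h, degree_zero]; exact WithBot.bot_lt_coe n
    · have hP0 : P ≠ 0 := by
        intro h0; apply h; rw [hBdef, h0, zero_divByMonic]
      have h2n : P.natDegree < n + n := (natDegree_lt_iff_degree_lt hP0).2 hP
      have hBnat : B.natDegree = P.natDegree - n := (natDegree_divByMonic P hxm).trans (by simp)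
      rw [← natDegree_lt_iff_degree_lt h, hBnat]
      omega
  have hmod : P %ₘ (X ^ n - 1) = B + A := by rw [hPeq]; exact modM hn hA hB
  have h1 : ((X ^ n * B).coeff k) = 0 := by rw [coeff_X_pow_mul']; simp [Nat.not_le.2 hk]
  have h2 : ((X ^ n * B).coeff (k + n)) = B.coeff k := by
    rw [coeff_X_pow_mul']; simp
  have h3 : A.coeff (k + n) = 0 :=
    coeff_eq_zero_of_degree_lt (hA.trans_le (by exact_mod_cast Nat.le_add_left n k))
  have e1 : P.coeff k = A.coeff k := by
    have := congrArg (fun q : Polynomial R => q.coeff k) hPeq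
    simpa [h1] using this
  have e2 : P.coeff (k + n) = B.coeff k := by
    have := congrArg (fun q : Polynomial R => q.coeff (k + n)) hPeq
    simpa [h2, h3] using this
  rw [hmod, coeff_add, e1, e2]
  ring

private lemma lemW [Nontrivial R] {n : ℕ} (hn : 1 ≤ n) {F : Polynomial R}
    (hF : F.degree < n) {j : ℕ} (hj : j < n) :
    ((X ^ j * F) %ₘ (X ^ n - 1)).coeff (n - 1) = F.coeff (n - 1 - j) := by
  have hdeg : (X ^ j * F).degree < ((n + n : ℕ) : WithBot ℕ) := by
    calc (X ^ j * F).degree ≤ (X ^ j : Polynomial R).degree + F.degree := degree_mul_le _ _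
    _ < (j : WithBot ℕ) + n := by
        rw [degree_X_pow]
        exact WithBot.add_lt_add_left (by simp) hF
    _ ≤ ((n + n : ℕ) : WithBot ℕ) := by
        push_cast
        exact add_le_add_left (by exact_mod_cast hj.le) _
  rw [coeffC hn hdeg (by omega)]
  have h1 : (X ^ j * F).coeff (n - 1) = F.coeff (n - 1 - j) := by
    rw [coeff_X_pow_mul']; simp [Nat.le_sub_one_of_lt hj]
  have h2 : (X ^ j * F).coeff (n - 1 + n) = 0 := by
    rw [coeff_X_pow_mul', if_pos (by omega)]
    exact coeff_eq_zero_of_degree_lt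
      (hF.trans_le (by exact_mod_cast (by omega : n ≤ n - 1 + n - j)))
  rw [h1, h2, add_zero]

end aux

theorem eval_modByMonic_pow_sub_one {R : Type*} [CommRing R] (n : ℕ) (hn : 1 ≤ n)
    (F G : Polynomial R) (hF : F.degree < n) (hG : G.degree < n) (α : R)
    (c : ℕ → R) (hc0 : c 0 = F.eval α)
    (hcrec : ∀ j < n - 1, c (j + 1) = α * c j - (α ^ n - 1) * F.coeff (n - 1 - j)) :
    ((F * G) %ₘ (X ^ n - 1)).eval α = ∑ j ∈ range n, c j * G.coeff j := by
  nontriviality R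
  have hpm : (X ^ n - 1 : Polynomial R).Monic := by
    simpa using monic_X_pow_sub_C (1 : R) (by omega)
  have hpd : (X ^ n - 1 : Polynomial R).degree = n := by
    simpa using degree_X_pow_sub_C (by omega) (1 : R)
  -- main induction
  have main : ∀ j < n, ((X ^ j * F) %ₘ (X ^ n - 1)).eval α = c j := by
    intro j
    induction j with
    | zero =>
      intro _
      rw [pow_zero, one_mul, (modByMonic_eq_self_iff hpm).2 (hpd ▸ hF), hc0]
    | succ j ih =>
      intro hj1
      have hj : j < n := by omega
      set Hj := (X ^ j * F) %ₘ (X ^ n - 1) with hHj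
      have hHdeg : Hj.degree < n := hpd ▸ degree_modByMonic_lt _ hpm
      set h := Hj.coeff (n - 1) with hh
      have hW : h = F.coeff (n - 1 - j) := lemW hn hF hj
      -- reduce to X * Hj
      have step1 : (X ^ (j + 1) * F) %ₘ (X ^ n - 1) = (X * Hj) %ₘ (X ^ n - 1) := by
        have key : X ^ (j + 1) * F =
            (X ^ n - 1) * (X * ((X ^ j * F) /ₘ (X ^ n - 1))) + X * Hj := by
          have hmd := modByMonic_add_div (X ^ j * F) (X ^ n - 1)
          calc X ^ (j + 1) * F = X * (X ^ j * F) := by ring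
          _ = X * ((X ^ j * F) %ₘ (X ^ n - 1) + (X ^ n - 1) * ((X ^ j * F) /ₘ (X ^ n - 1))) := by
              rw [hmd]
          _ = _ := by rw [← hHj]; ring
        rw [key, add_modByMonic, (modByMonic_eq_zero_iff_dvd hpm).2 (dvd_mul_right _ _), zero_add]
      -- compute (X * Hj) %ₘ (X^n - 1)
      have hAdeg : (X * Hj - C h * X ^ n).degree < (n : WithBot ℕ) := by
        rw [degree_lt_iff_coeff_zero]
        intro m hm
        have hm' : n ≤ m := by exact_mod_cast hm
        have hxc : (X * Hj).coeff m = Hj.coeff (m - 1) := by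
          rw [mul_comm]
          conv_lhs => rw [show m = (m - 1) + 1 by omega]
          rw [coeff_mul_X]
        by_cases hmn : m = n
        · subst hmn
          simp [coeff_sub, hxc, coeff_C_mul, coeff_X_pow, ← hh]
        · have h1 : Hj.coeff (m - 1) = 0 :=
            coeff_eq_zero_of_degree_lt
              (hHdeg.trans_le (by exact_mod_cast (by omega : n ≤ m - 1)))
          simp [coeff_sub, hxc, h1, coeff_C_mul, coeff_X_pow, hmn]
      have hChdeg : (C h : Polynomial R).degree < (n : WithBot ℕ) :=
        lt_of_le_of_lt degree_C_le (by exact_mod_cast hn)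
      have step2 : (X * Hj) %ₘ (X ^ n - 1) = X * Hj - C h * (X ^ n - 1) := by
        have key : X * Hj = X ^ n * C h + (X * Hj - C h * X ^ n) := by ring
        rw [key, modM hn hAdeg hChdeg]
        ring
      rw [step1, step2]
      rw [hcrec j (by omega), ← hW, ← ih hj]
      simp [eval_mul, eval_sub, eval_pow]
      ring
  -- decompose G
  have hGnat : G.natDegree < n := by
    rcases eq_or_ne G 0 with rfl | hG0
    · simpa using (show 0 < n by omega)
    · exact (natDegree_lt_iff_degree_lt hG0).2 hG
  have hFG : F * G = ∑ j ∈ range n, G.coeff j • (X ^ j * F) := by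
    conv_lhs => rw [G.as_sum_range' n hGnat]
    rw [mul_sum]
    refine Finset.sum_congr rfl fun j _ => ?_
    rw [smul_eq_C_mul, ← C_mul_X_pow_eq_monomial]
    ring
  rw [hFG]
  have : (∑ j ∈ range n, G.coeff j • (X ^ j * F)) %ₘ (X ^ n - 1)
      = ∑ j ∈ range n, G.coeff j • ((X ^ j * F) %ₘ (X ^ n - 1)) := by
    have hms := map_sum (modByMonicHom (X ^ n - 1))
      (fun j => G.coeff j • (X ^ j * F)) (range n)
    simp only [modByMonicHom_apply] at hms
    rw [hms]
    exact Finset.sum_congr rfl fun j _ => smul_modByMonic _ _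
  rw [this, eval_finset_sum]
  refine Finset.sum_congr rfl fun j hj => ?_
  rw [smul_eq_C_mul, eval_mul, eval_C, main j (mem_range.1 hj)]
  ring
end

section
/- Let R be a commutative ring, P ∈ R[X] monic of degree n with at least 2 nonzero coefficients, and γ ∈ (0,1] such that the degree of P − X^n is at most (1−γ)·n. Let F ∈ R[X] with deg F < n, and for 0 ≤ i ≤ n−2 let F^{[i]} = (X^i·F) mod P. Then the number of indices i ∈ {0, …, n−2} such that the coefficient of X^{n−1} in F^{[i]} is nonzero is at most #F·(#P)^{⌈1/γ − 1⌉}. -/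
open Polynomial

lemma coeff_mod_mul_eq_sum {R : Type*} [CommRing R] (P : Polynomial R) (e m : ℕ) (G : Polynomial R) :
    ((X ^ e * G) %ₘ P).coeff m = ∑ b ∈ G.support, G.coeff b * ((X ^ (e + b) %ₘ P).coeff m) := by
  conv_lhs => rw [G.as_sum_support, Finset.mul_sum]
  have h1 : ∀ b ∈ G.support, X ^ e * (monomial b) (G.coeff b) = G.coeff b • X ^ (e + b) := by
    intro b _
    rw [← C_mul_X_pow_eq_monomial, smul_eq_C_mul, pow_add]; ring
  rw [Finset.sum_congr rfl h1]
  have : (∑ b ∈ G.support, G.coeff b • X ^ (e + b)) %ₘ P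
      = ∑ b ∈ G.support, G.coeff b • (X ^ (e + b) %ₘ P) := by
    induction G.support using Finset.induction with
    | empty => simp [zero_modByMonic]
    | insert _ _ h ih => simp [Finset.sum_insert h, add_modByMonic, smul_modByMonic, ih]
  rw [this, finset_sum_coeff]
  simp [coeff_smul, smul_eq_mul]

def Tset (s : Finset ℕ) (n : ℕ) : ℕ → Finset ℕ
  | 0 => {n - 1}
  | m + 1 => {n - 1} ∪ (Tset s n m).biUnion (fun e => s.image (fun b => e + n - b))

lemma Tset_card_le (s : Finset ℕ) (n : ℕ) : ∀ m, (Tset s n m).card ≤ (s.card + 1) ^ m := by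
  intro m
  induction m with
  | zero => simp [Tset]
  | succ m ih =>
    calc (Tset s n (m+1)).card
        ≤ ({n-1} : Finset ℕ).card + ((Tset s n m).biUnion (fun e => s.image (fun b => e + n - b))).card :=
          Finset.card_union_le _ _
    _ ≤ 1 + (Tset s n m).card * s.card := by
        gcongr
        · simp
        · calc _ ≤ ∑ e ∈ Tset s n m, (s.image (fun b => e + n - b)).card := Finset.card_biUnion_le
            _ ≤ ∑ e ∈ Tset s n m, s.card := Finset.sum_le_sum (fun e _ => Finset.card_image_le)
            _ = _ := by rw [Finset.sum_const, smul_eq_mul]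
    _ ≤ 1 + (s.card + 1) ^ m * s.card := by gcongr
    _ ≤ (s.card + 1) ^ (m + 1) := by
        rw [pow_succ]
        have h1 : 1 ≤ (s.card + 1) ^ m := Nat.one_le_pow _ _ (Nat.succ_pos _)
        nlinarith [h1]

theorem count_nonzero_leading_coeffs_le {R : Type*} [CommRing R] (n : ℕ) (γ : ℝ)
    (P F : Polynomial R) (hP : P.Monic) (hPdeg : P.natDegree = n)
    (hPsp : 2 ≤ P.support.card) (hγ0 : 0 < γ) (hγ1 : γ ≤ 1)
    (hgap : ((P - X ^ n).natDegree : ℝ) ≤ (1 - γ) * n)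
    (hF : F.degree < n) :
    {i : ℕ | i < n - 1 ∧ ((X ^ i * F) %ₘ P).coeff (n - 1) ≠ 0}.ncard ≤
      F.support.card * P.support.card ^ ⌈1 / γ - 1⌉₊ := by
  -- nontriviality
  have hR : Nontrivial R := by
    obtain ⟨a, ha⟩ := Finset.card_pos.mp (lt_of_lt_of_le (by norm_num) hPsp)
    exact nontrivial_of_ne (P.coeff a) 0 (mem_support_iff.mp ha)
  -- n ≥ 1
  have hn : 1 ≤ n := by
    have h1 : P.support.card ≤ P.natDegree + 1 :=
      le_trans (Finset.card_le_card P.supp_subset_range_natDegree_succ) (by simp)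
    omega
  have hn1 : (1:ℝ) ≤ n := by exact_mod_cast hn
  set k := ⌈1 / γ - 1⌉₊ with hk
  set D := X ^ n - P with hD
  -- degree facts about D
  have hDnat : (D.natDegree : ℝ) ≤ (1 - γ) * n := by
    have : D = -(P - X ^ n) := by ring
    rw [this, natDegree_neg]; exact hgap
  have hDltn : D.natDegree < n := by
    have : (D.natDegree : ℝ) < n := by nlinarith
    exact_mod_cast this
  have hPdegree : P.degree = (n : ℕ) := by
    rw [degree_eq_natDegree hP.ne_zero, hPdeg]
  -- key: small exponents
  have hsmall : ∀ d, d < n → (X ^ d %ₘ P).coeff (n-1) ≠ 0 → d = n - 1 := by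
    intro d hd hne
    rw [(modByMonic_eq_self_iff hP).mpr (by rw [degree_X_pow, hPdegree]; exact_mod_cast hd),
      coeff_X_pow] at hne
    by_contra hc
    exact hne (if_neg (fun h => hc h.symm))
  -- key: reduction step
  have hcstep : ∀ d, n ≤ d → (X ^ d %ₘ P).coeff (n-1)
      = ∑ b ∈ D.support, D.coeff b * ((X ^ (d - n + b) %ₘ P).coeff (n-1)) := by
    intro d hd
    have hX : (X:Polynomial R) ^ d = X ^ (d-n) * D + X ^ (d-n) * P := by
      rw [hD, mul_sub]
      rw [← pow_add, Nat.sub_add_cancel hd]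
      ring
    rw [hX, add_modByMonic,
      (modByMonic_eq_zero_iff_dvd hP).mpr (dvd_mul_left _ _), add_zero,
      coeff_mod_mul_eq_sum]
  have hbb : ∀ b ∈ D.support, (b : ℝ) ≤ (1 - γ) * n := by
    intro b hb
    exact le_trans (by exact_mod_cast le_natDegree_of_mem_supp b hb) hDnat
  -- main induction
  have hmem : ∀ (m d : ℕ), (X ^ d %ₘ P).coeff (n-1) ≠ 0 →
      (d : ℝ) ≤ (n:ℝ) - 2 + ((m:ℝ)+1) * (γ * n) → d ∈ Tset D.support n m := by
    intro m
    induction m with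
    | zero =>
      intro d hne hdle
      by_cases hd : d < n
      · simp [Tset, hsmall d hd hne]
      · push_neg at hd
        exfalso
        rw [hcstep d hd] at hne
        obtain ⟨b, hb, hterm⟩ := Finset.exists_ne_zero_of_sum_ne_zero hne
        have hce := right_ne_zero_of_mul hterm
        have heR : ((d - n + b : ℕ) : ℝ) ≤ (n:ℝ) - 2 := by
          have h1 := hbb b hb
          push_cast [Nat.cast_sub hd]
          simp only [Nat.cast_zero, zero_add, one_mul] at hdle
          nlinarith
        have hlt : d - n + b < n := by
          have : ((d - n + b : ℕ) : ℝ) < n := by linarith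
          exact_mod_cast this
        have heq := hsmall _ hlt hce
        rw [heq] at heR
        rw [Nat.cast_sub hn] at heR
        norm_num at heR
        linarith
    | succ m ih =>
      intro d hne hdle
      by_cases hd : d < n
      · simp [Tset, hsmall d hd hne]
      · push_neg at hd
        rw [hcstep d hd] at hne
        obtain ⟨b, hb, hterm⟩ := Finset.exists_ne_zero_of_sum_ne_zero hne
        have hce := right_ne_zero_of_mul hterm
        have hgn : (0:ℝ) < γ * n := by positivity
        have heR : ((d - n + b : ℕ) : ℝ) ≤ (n:ℝ) - 2 + ((m:ℝ)+1) * (γ * n) := by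
          have h1 := hbb b hb
          push_cast [Nat.cast_sub hd]
          push_cast at hdle
          nlinarith
        have hmemE := ih _ hce heR
        have hdeq : (d - n + b) + n - b = d := by omega
        simp only [Tset, Finset.mem_union, Finset.mem_biUnion]
        right
        exact ⟨_, hmemE, Finset.mem_image.mpr ⟨b, hb, hdeq⟩⟩
  -- card comparison between D.support and P.support
  have hnP : n ∈ P.support := by
    rw [mem_support_iff, ← hPdeg, hP.coeff_natDegree]
    exact one_ne_zero
  have hDsub : D.support ⊆ P.support.erase n := by
    intro b hb
    rw [mem_support_iff, hD] at hb
    rcases eq_or_ne b n with rfl | hbn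
    · exfalso
      apply hb
      rw [coeff_sub, coeff_X_pow, if_pos rfl, ← hPdeg, hP.coeff_natDegree, sub_self]
    · rw [Finset.mem_erase]
      refine ⟨hbn, mem_support_iff.mpr ?_⟩
      intro h0
      apply hb
      rw [coeff_sub, coeff_X_pow, if_neg hbn, h0, sub_zero]
  have hDcard : D.support.card + 1 ≤ P.support.card := by
    have h1 : D.support.card ≤ (P.support.erase n).card := Finset.card_le_card hDsub
    have h2 : (P.support.erase n).card = P.support.card - 1 := Finset.card_erase_of_mem hnP
    omega
  -- the final counting
  set B : Finset ℕ := F.support.biUnion (fun a => (Tset D.support n k).image (fun e => e - a)) with hB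
  have hsub : {i : ℕ | i < n - 1 ∧ ((X ^ i * F) %ₘ P).coeff (n - 1) ≠ 0} ⊆ ↑B := by
    rintro i ⟨hi, hne⟩
    rw [coeff_mod_mul_eq_sum] at hne
    obtain ⟨a, ha, hterm⟩ := Finset.exists_ne_zero_of_sum_ne_zero hne
    have hca := right_ne_zero_of_mul hterm
    -- bounds
    have hFne : F ≠ 0 := fun h => by simp [h] at ha
    have haltn : a < n := by
      have := le_natDegree_of_mem_supp a ha
      have h2 : F.natDegree < n := (natDegree_lt_iff_degree_lt hFne).mpr (by exact_mod_cast hF)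
      omega
    have hk1 : (1:ℝ) ≤ ((k:ℝ)+1) * γ := by
      have := Nat.le_ceil (1/γ - 1)
      rw [← hk] at this
      have h2 : 1/γ ≤ (k:ℝ) + 1 := by linarith
      calc (1:ℝ) = (1/γ) * γ := by field_simp
        _ ≤ ((k:ℝ)+1) * γ := by nlinarith
    have hdle : ((i + a : ℕ) : ℝ) ≤ (n:ℝ) - 2 + ((k:ℝ)+1) * (γ * n) := by
      have h1 : (i:ℝ) ≤ (n:ℝ) - 2 := by
        have : (i:ℝ) + 2 ≤ n := by exact_mod_cast (by omega : i + 2 ≤ n)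
        linarith
      have h2 : (a:ℝ) ≤ (n:ℝ) - 1 := by
        have : (a:ℝ) + 1 ≤ n := by exact_mod_cast haltn
        linarith
      have h3 : (n:ℝ) ≤ ((k:ℝ)+1) * (γ * n) := by nlinarith
      push_cast
      linarith
    have hmemT := hmem k (i + a) hca hdle
    rw [hB]
    simp only [Finset.coe_biUnion, Set.mem_iUnion, Finset.mem_coe]
    exact ⟨a, ha, Finset.mem_image.mpr ⟨i + a, hmemT, by omega⟩⟩
  calc {i : ℕ | i < n - 1 ∧ ((X ^ i * F) %ₘ P).coeff (n - 1) ≠ 0}.ncard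
      ≤ (↑B : Set ℕ).ncard := Set.ncard_le_ncard hsub B.finite_toSet
    _ = B.card := Set.ncard_coe_finset B
    _ ≤ ∑ a ∈ F.support, ((Tset D.support n k).image (fun e => e - a)).card := Finset.card_biUnion_le
    _ ≤ ∑ a ∈ F.support, (D.support.card + 1) ^ k :=
        Finset.sum_le_sum (fun a _ => le_trans Finset.card_image_le (Tset_card_le _ _ _))
    _ = F.support.card * (D.support.card + 1) ^ k := by rw [Finset.sum_const, smul_eq_mul]
    _ ≤ F.support.card * P.support.card ^ k := by
        gcongr
end

section
/- Let F, G, H ∈ ℤ[X] with deg F ≤ n and deg G ≤ n, and suppose ‖F‖, ‖G‖, ‖H‖ ≤ C for some integer C ≥ 1. Let β be an integer with β ≥ 2(n+1)·C² + 2C + 1. Then H = F·G if and only if H(β) = F(β)·G(β). -/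
open Polynomial

lemma polyNorm_coeff_le {F : Polynomial ℤ} {C : ℕ} (h : polyNorm F ≤ C) (i : ℕ) :
    |F.coeff i| ≤ (C : ℤ) := by
  by_cases hi : i ∈ F.support
  · have h2 : (F.coeff i).natAbs ≤ polyNorm F :=
      Finset.le_sup (f := fun i => (F.coeff i).natAbs) hi
    have : (F.coeff i).natAbs ≤ C := le_trans h2 h
    rw [Int.abs_eq_natAbs]
    exact_mod_cast this
  · rw [Polynomial.notMem_support_iff.mp hi]
    simp

lemma eval_zero_of_small (B β : ℤ) (hβ : 2 * B + 1 ≤ β) :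
    ∀ m : ℕ, ∀ P : Polynomial ℤ, P.natDegree ≤ m →
      (∀ k, |P.coeff k| ≤ B) → P.eval β = 0 → P = 0 := by
  intro m
  induction m with
  | zero =>
    intro P hdeg hc h0
    obtain ⟨c, rfl⟩ := Polynomial.natDegree_eq_zero.mp (Nat.le_zero.mp hdeg)
    simpa using h0
  | succ m ih =>
    intro P hdeg hc h0
    have hB : 0 ≤ B := le_trans (abs_nonneg _) (hc 0)
    have hβpos : 0 < β := by linarith
    have hsplit : P.divX * X + C (P.coeff 0) = P := Polynomial.divX_mul_X_add P
    have heval : P.divX.eval β * β + P.coeff 0 = 0 := by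
      have := congrArg (Polynomial.eval β) hsplit
      simpa using this.trans h0
    have hdiv0 : P.divX.eval β = 0 := by
      by_contra hne
      have h1 : (1 : ℤ) ≤ |P.divX.eval β| := by
        rcases lt_or_gt_of_ne hne with h | h <;> [skip; skip] <;>
          simp [abs_of_neg, abs_of_pos, *] <;> omega
      have : |P.coeff 0| = |P.divX.eval β| * |β| := by
        rw [← abs_mul]
        have : P.coeff 0 = -(P.divX.eval β * β) := by linarith
        rw [this, abs_neg]
      have hge : β ≤ |P.coeff 0| := by
        rw [this]
        calc β = 1 * β := (one_mul β).symm
        _ = 1 * |β| := by rw [abs_of_pos hβpos]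
        _ ≤ |P.divX.eval β| * |β| := by
            apply mul_le_mul_of_nonneg_right h1 (abs_nonneg _)
      have := hc 0
      linarith
    have hc0 : P.coeff 0 = 0 := by
      rw [hdiv0] at heval; linarith
    have hdivzero : P.divX = 0 := by
      apply ih P.divX
      · have := Polynomial.natDegree_divX_eq_natDegree_tsub_one (p := P)
        omega
      · intro k; rw [Polynomial.coeff_divX]; exact hc _
      · exact hdiv0
    rw [← hsplit, hdivzero, hc0]
    simp

theorem kronecker_substitution_verification (n C : ℕ) (hC : 1 ≤ C)
    (F G H : Polynomial ℤ) (hF : F.natDegree ≤ n) (hG : G.natDegree ≤ n)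
    (hFC : polyNorm F ≤ C) (hGC : polyNorm G ≤ C) (hHC : polyNorm H ≤ C)
    (β : ℤ) (hβ : 2 * (n + 1) * (C : ℤ) ^ 2 + 2 * C + 1 ≤ β) :
    H = F * G ↔ H.eval β = F.eval β * G.eval β := by
  constructor
  · rintro rfl; simp
  · intro hev
    set D := F * G - H with hD
    have hDev : D.eval β = 0 := by simp [hD, hev]
    have hmulc : ∀ k, |(F * G).coeff k| ≤ (n + 1 : ℤ) * (C : ℤ) ^ 2 := by
      intro k
      rw [Polynomial.coeff_mul]
      calc |∑ p ∈ Finset.HasAntidiagonal.antidiagonal k, F.coeff p.1 * G.coeff p.2|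
          ≤ ∑ p ∈ Finset.HasAntidiagonal.antidiagonal k, |F.coeff p.1 * G.coeff p.2| :=
            Finset.abs_sum_le_sum_abs _ _
        _ = ∑ p ∈ (Finset.HasAntidiagonal.antidiagonal k).filter (fun p => p.1 ≤ n),
              |F.coeff p.1 * G.coeff p.2| := by
            refine (Finset.sum_filter_of_ne ?_).symm
            intro p _ hne
            by_contra hgt
            push_neg at hgt
            have : F.coeff p.1 = 0 :=
              Polynomial.coeff_eq_zero_of_natDegree_lt (lt_of_le_of_lt hF hgt)
            simp [this] at hne
        _ ≤ ∑ _p ∈ (Finset.HasAntidiagonal.antidiagonal k).filter (fun p => p.1 ≤ n), (C : ℤ)^2 := by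
            apply Finset.sum_le_sum
            intro p _
            rw [abs_mul, sq]
            exact mul_le_mul (polyNorm_coeff_le hFC _) (polyNorm_coeff_le hGC _)
              (abs_nonneg _) (by positivity)
        _ = ((Finset.HasAntidiagonal.antidiagonal k).filter (fun p => p.1 ≤ n)).card * (C : ℤ)^2 := by
            rw [Finset.sum_const, nsmul_eq_mul]
        _ ≤ (n + 1 : ℤ) * (C : ℤ)^2 := by
            apply mul_le_mul_of_nonneg_right _ (by positivity)
            have hcard : ((Finset.HasAntidiagonal.antidiagonal k).filter (fun p => p.1 ≤ n)).card ≤ n + 1 := by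
              have : ((Finset.HasAntidiagonal.antidiagonal k).filter (fun p => p.1 ≤ n)) ⊆
                  (Finset.range (n+1)).image (fun i => (i, k - i)) := by
                intro p hp
                simp only [Finset.mem_filter, Finset.mem_antidiagonal] at hp
                simp only [Finset.mem_image, Finset.mem_range]
                exact ⟨p.1, by omega, by
                  obtain ⟨a, b⟩ := p
                  simp at hp ⊢
                  omega⟩
              calc _ ≤ ((Finset.range (n+1)).image (fun i => (i, k - i))).card :=
                    Finset.card_le_card this
                _ ≤ (Finset.range (n+1)).card := Finset.card_image_le
                _ = n + 1 := Finset.card_range _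
            exact_mod_cast hcard
    have hDc : ∀ k, |D.coeff k| ≤ (n + 1 : ℤ) * (C : ℤ)^2 + C := by
      intro k
      rw [hD, Polynomial.coeff_sub]
      calc |(F * G).coeff k - H.coeff k| ≤ |(F * G).coeff k| + |H.coeff k| := abs_sub _ _
        _ ≤ (n + 1 : ℤ) * (C : ℤ)^2 + C :=
            add_le_add (hmulc k) (polyNorm_coeff_le hHC k)
    have : D = 0 := eval_zero_of_small ((n + 1 : ℤ) * (C : ℤ)^2 + C) β
      (by push_cast at hβ ⊢; linarith) D.natDegree D le_rfl hDc hDev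
    exact (sub_eq_zero.mp this).symm
end

section
/- Let R be a nontrivial commutative ring and let M be a nonzero k × m matrix over R. Then the number of vectors u ∈ {0,1}^k ⊆ R^k such that the row-vector–matrix product u·M is the zero vector is at most 2^{k−1}. -/
theorem freivalds_count {R : Type*} [CommRing R] [Nontrivial R] (k m : ℕ)
    (M : Matrix (Fin k) (Fin m) R) (hM : M ≠ 0) :
    {u : Fin k → R | (∀ i, u i = 0 ∨ u i = 1) ∧ Matrix.vecMul u M = 0}.ncard ≤
      2 ^ (k - 1) := by
  classical
  obtain ⟨i0, j0, hij⟩ : ∃ i j, M i j ≠ 0 := by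
    by_contra h
    push_neg at h
    exact hM (by ext i j; simp [h])
  set S := {u : Fin k → R | (∀ i, u i = 0 ∨ u i = 1) ∧ Matrix.vecMul u M = 0} with hS
  set g : (Fin k → R) → ({i : Fin k // i ≠ i0} → R) := fun u i => u i.1 with hg
  have hinj : Set.InjOn g S := by
    rintro u ⟨hu01, hu⟩ v ⟨hv01, hv⟩ huv
    have heq : ∀ i, i ≠ i0 → u i = v i := fun i hi => congrFun huv ⟨i, hi⟩
    have hsum : ∑ i, (u i - v i) * M i j0 = 0 := by
      have h1 := congrFun hu j0
      have h2 := congrFun hv j0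
      simp [Matrix.vecMul, dotProduct] at h1 h2
      simp [sub_mul, Finset.sum_sub_distrib, h1, h2]
    rw [Finset.sum_eq_single i0 (fun i _ hi => by rw [heq i hi]; ring) (by simp)] at hsum
    have hii : u i0 = v i0 := by
      rcases hu01 i0 with h | h <;> rcases hv01 i0 with h' | h' <;>
        rw [h, h'] at hsum ⊢ <;> simp_all
    funext i
    by_cases hi : i = i0
    · subst hi; exact hii
    · exact heq i hi
  set h : ({i : Fin k // i ≠ i0} → Bool) → ({i : Fin k // i ≠ i0} → R) :=
    fun b i => if b i then 1 else 0 with hh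
  have himg : g '' S ⊆ Set.range h := by
    rintro f ⟨u, ⟨hu01, _⟩, rfl⟩
    refine ⟨fun i => if u i.1 = 0 then false else true, ?_⟩
    funext i
    rcases hu01 i.1 with h0 | h1
    · simp [hh, hg, h0]
    · simp [hh, hg, h1]
  have hinjh : Function.Injective h := by
    intro b b' hb
    funext i
    have := congrFun hb i
    by_cases h1 : b i <;> by_cases h2 : b' i <;>
      simp only [hh, h1, h2, if_true, if_false] at this ⊢ <;>
      first
        | rfl
        | exact absurd this one_ne_zero
        | exact absurd this.symm one_ne_zero
  calc S.ncard = (g '' S).ncard := (Set.ncard_image_of_injOn hinj).symm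
    _ ≤ (Set.range h).ncard := Set.ncard_le_ncard himg (Set.finite_range h)
    _ = Fintype.card ({i : Fin k // i ≠ i0} → Bool) := by
        rw [Set.ncard_eq_toFinset_card', Set.toFinset_range,
          Finset.card_image_of_injective _ hinjh, Finset.card_univ]
    _ = 2 ^ (k - 1) := by
        rw [Fintype.card_fun, Fintype.card_bool, Fintype.card_subtype_compl,
          Fintype.card_fin, Fintype.card_subtype_eq]
end
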